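/- Let μ and ν be Borel probability measures on ℝ^d and let π be a coupling of μ and ν, i.e. a Borel probability measure on ℝ^d × ℝ^d whose first marginal is μ and whose second marginal is ν. Let v : ℝ^d → [0, ∞) be Borel measurable with ∫ v dμ < ∞ and ∫ v dν < ∞, let κ ≥ 0, and let b̄ : ℝ^d → ℝ^d be Borel measurable, integrable with respect to both μ and ν, satisfying ‖b̄(x) − b̄(y)‖ ≤ κ (1 + √(v(x)) + √(v(y))) ‖x − y‖ for all x, y ∈ ℝ^d. Then ‖ ∫_{ℝ^d} b̄ dμ − ∫_{ℝ^d} b̄ dν ‖² ≤ 4 κ² ( 1 + ∫_{ℝ^d} v dμ + ∫_{ℝ^d} v dν ) · ∫_{ℝ^d × ℝ^d} ‖x − y‖² π(dx, dy). -/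

import Mathlib

open MeasureTheory

/-- Key coupling estimate for the Scheutzow-type uniqueness argument: if `π` is a coupling of
`μ` and `ν`, `v ≥ 0` is integrable with respect to both marginals and `b̄` satisfies the
weighted Lipschitz bound `‖b̄(x) − b̄(y)‖ ≤ κ(1 + √v(x) + √v(y))‖x − y‖`, then
`‖∫ b̄ dμ − ∫ b̄ dν‖² ≤ 4κ²(1 + ∫ v dμ + ∫ v dν) ∫ ‖x − y‖² dπ`. -/
theorem coupling_estimate_scheutzow
    {d : ℕ}
    (μ ν : Measure (EuclideanSpace ℝ (Fin d)))
    [IsProbabilityMeasure μ] [IsProbabilityMeasure ν]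
    (π : Measure (EuclideanSpace ℝ (Fin d) × EuclideanSpace ℝ (Fin d)))
    [IsProbabilityMeasure π]
    (hπ1 : π.map Prod.fst = μ) (hπ2 : π.map Prod.snd = ν)
    (v : EuclideanSpace ℝ (Fin d) → ℝ) (hvmeas : Measurable v) (hv0 : ∀ x, 0 ≤ v x)
    (hvμ : Integrable v μ) (hvν : Integrable v ν)
    (κ : ℝ) (hκ : 0 ≤ κ)
    (bbar : EuclideanSpace ℝ (Fin d) → EuclideanSpace ℝ (Fin d)) (hbmeas : Measurable bbar)
    (hbμ : Integrable bbar μ) (hbν : Integrable bbar ν)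
    (hlip : ∀ x y, ‖bbar x - bbar y‖ ≤ κ * (1 + Real.sqrt (v x) + Real.sqrt (v y)) * ‖x - y‖) :
    ENNReal.ofReal (‖(∫ x, bbar x ∂μ) - ∫ x, bbar x ∂ν‖ ^ 2)
      ≤ ENNReal.ofReal (4 * κ ^ 2 * (1 + (∫ x, v x ∂μ) + ∫ x, v x ∂ν)) *
          ∫⁻ p, ENNReal.ofReal (‖p.1 - p.2‖ ^ 2) ∂π := by
  -- transport integrals to π
  have hb1 : Integrable (fun p : _ × _ => bbar p.1) π := by
    rw [← hπ1] at hbμ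
    exact (integrable_map_measure hbmeas.aestronglyMeasurable measurable_fst.aemeasurable).mp hbμ
  have hb2 : Integrable (fun p : _ × _ => bbar p.2) π := by
    rw [← hπ2] at hbν
    exact (integrable_map_measure hbmeas.aestronglyMeasurable measurable_snd.aemeasurable).mp hbν
  have hA : (∫ x, bbar x ∂μ) - ∫ x, bbar x ∂ν = ∫ p, (bbar p.1 - bbar p.2) ∂π := by
    rw [integral_sub hb1 hb2, ← hπ1, ← hπ2,
      integral_map measurable_fst.aemeasurable hbmeas.aestronglyMeasurable,
      integral_map measurable_snd.aemeasurable hbmeas.aestronglyMeasurable]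
  set A := (∫ x, bbar x ∂μ) - ∫ x, bbar x ∂ν with hAdef
  -- step 1: ofReal ‖A‖ ≤ lintegral of the norm
  have hnorm : ENNReal.ofReal ‖A‖ ≤ ∫⁻ p, ENNReal.ofReal ‖bbar p.1 - bbar p.2‖ ∂π := by
    rw [hA]
    calc ENNReal.ofReal ‖∫ p, (bbar p.1 - bbar p.2) ∂π‖
        ≤ ENNReal.ofReal (∫ p, ‖bbar p.1 - bbar p.2‖ ∂π) :=
          ENNReal.ofReal_le_ofReal (norm_integral_le_integral_norm _)
      _ = ∫⁻ p, ENNReal.ofReal ‖bbar p.1 - bbar p.2‖ ∂π := by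
          exact ofReal_integral_eq_lintegral_ofReal (hb1.sub hb2).norm
            (Filter.Eventually.of_forall fun p => norm_nonneg _)
  -- pointwise lipschitz bound in ENNReal
  have hpt : ∀ p : EuclideanSpace ℝ (Fin d) × EuclideanSpace ℝ (Fin d),
      ENNReal.ofReal ‖bbar p.1 - bbar p.2‖ ≤
        ENNReal.ofReal (κ * (1 + Real.sqrt (v p.1) + Real.sqrt (v p.2))) *
          ENNReal.ofReal ‖p.1 - p.2‖ := by
    intro p
    rw [← ENNReal.ofReal_mul (by positivity)]
    exact ENNReal.ofReal_le_ofReal (hlip p.1 p.2)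
  set f : EuclideanSpace ℝ (Fin d) × EuclideanSpace ℝ (Fin d) → ENNReal :=
    fun p => ENNReal.ofReal (κ * (1 + Real.sqrt (v p.1) + Real.sqrt (v p.2))) with hf
  set g : EuclideanSpace ℝ (Fin d) × EuclideanSpace ℝ (Fin d) → ENNReal :=
    fun p => ENNReal.ofReal ‖p.1 - p.2‖ with hg
  have hfmeas : AEMeasurable f π := by
    apply Measurable.aemeasurable
    apply ENNReal.measurable_ofReal.comp
    exact (measurable_const.mul (((measurable_const.add
      ((hvmeas.comp measurable_fst).sqrt)).add ((hvmeas.comp measurable_snd).sqrt))))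
  have hgmeas : AEMeasurable g π := by
    apply Measurable.aemeasurable
    apply ENNReal.measurable_ofReal.comp
    exact (measurable_fst.sub measurable_snd).norm
  -- Cauchy-Schwarz
  have hpow : ∀ x : ℝ, 0 ≤ x → (ENNReal.ofReal x) ^ (2:ℝ) = ENNReal.ofReal (x ^ 2) := by
    intro x hx
    rw [show ((2:ℝ)) = ((2:ℕ):ℝ) by norm_num, ENNReal.rpow_natCast, ENNReal.ofReal_pow hx]
  have hCS : ∫⁻ p, f p * g p ∂π ≤
      (∫⁻ p, f p ^ (2:ℝ) ∂π) ^ ((1:ℝ)/2) * (∫⁻ p, g p ^ (2:ℝ) ∂π) ^ ((1:ℝ)/2) :=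
    ENNReal.lintegral_mul_le_Lp_mul_Lq π (Real.holderConjugate_iff_eq_conjExponent (by norm_num) |>.mpr (by norm_num)) hfmeas hgmeas
  -- bound on ∫ f^2
  have hf2 : ∫⁻ p, f p ^ (2:ℝ) ∂π ≤
      ENNReal.ofReal (4 * κ ^ 2 * (1 + (∫ x, v x ∂μ) + ∫ x, v x ∂ν)) := by
    have hptf : ∀ p : EuclideanSpace ℝ (Fin d) × EuclideanSpace ℝ (Fin d),
        f p ^ (2:ℝ) ≤ ENNReal.ofReal (4 * κ ^ 2) *
          (1 + ENNReal.ofReal (v p.1) + ENNReal.ofReal (v p.2)) := by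
      intro p
      have h1 : f p ^ (2:ℝ) = ENNReal.ofReal ((κ * (1 + Real.sqrt (v p.1) + Real.sqrt (v p.2)))^2) :=
        hpow _ (by positivity)
      rw [h1]
      have h2 : (κ * (1 + Real.sqrt (v p.1) + Real.sqrt (v p.2)))^2
          ≤ 4 * κ ^ 2 * (1 + v p.1 + v p.2) := by
        have ha := Real.sq_sqrt (hv0 p.1)
        have hb := Real.sq_sqrt (hv0 p.2)
        have hs1 := Real.sqrt_nonneg (v p.1)
        have hs2 := Real.sqrt_nonneg (v p.2)
        nlinarith [sq_nonneg (1 - Real.sqrt (v p.1)), sq_nonneg (1 - Real.sqrt (v p.2)),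
          sq_nonneg (Real.sqrt (v p.1) - Real.sqrt (v p.2)), sq_nonneg κ]
      calc ENNReal.ofReal ((κ * (1 + Real.sqrt (v p.1) + Real.sqrt (v p.2)))^2)
          ≤ ENNReal.ofReal (4 * κ ^ 2 * (1 + v p.1 + v p.2)) := ENNReal.ofReal_le_ofReal h2
        _ = ENNReal.ofReal (4 * κ ^ 2) * (1 + ENNReal.ofReal (v p.1) + ENNReal.ofReal (v p.2)) := by
            rw [ENNReal.ofReal_mul (p := 4 * κ ^ 2) (by positivity)]
            congr 1
            rw [ENNReal.ofReal_add (by linarith [hv0 p.1]) (hv0 p.2),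
              ENNReal.ofReal_add (by norm_num) (hv0 p.1), ENNReal.ofReal_one]
    calc ∫⁻ p, f p ^ (2:ℝ) ∂π
        ≤ ∫⁻ p, ENNReal.ofReal (4 * κ ^ 2) *
            (1 + ENNReal.ofReal (v p.1) + ENNReal.ofReal (v p.2)) ∂π :=
          lintegral_mono hptf
      _ = ENNReal.ofReal (4 * κ ^ 2) *
            ∫⁻ p, (1 + ENNReal.ofReal (v p.1) + ENNReal.ofReal (v p.2)) ∂π :=
          lintegral_const_mul _ (by
            exact (measurable_const.add (((hvmeas.comp measurable_fst).ennreal_ofReal))).add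
              (((hvmeas.comp measurable_snd).ennreal_ofReal)))
      _ = ENNReal.ofReal (4 * κ ^ 2) *
            (1 + ENNReal.ofReal (∫ x, v x ∂μ) + ENNReal.ofReal (∫ x, v x ∂ν)) := by
          congr 1
          have m1 : Measurable fun p : EuclideanSpace ℝ (Fin d) × EuclideanSpace ℝ (Fin d) =>
              ENNReal.ofReal (v p.1) := (hvmeas.comp measurable_fst).ennreal_ofReal
          have m2 : Measurable fun p : EuclideanSpace ℝ (Fin d) × EuclideanSpace ℝ (Fin d) =>
              ENNReal.ofReal (v p.2) := (hvmeas.comp measurable_snd).ennreal_ofReal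
          rw [lintegral_add_right _ m2, lintegral_add_right _ m1, lintegral_const]
          simp only [measure_univ, mul_one, one_mul]
          have e1 : ∫⁻ p : EuclideanSpace ℝ (Fin d) × EuclideanSpace ℝ (Fin d),
              ENNReal.ofReal (v p.1) ∂π = ENNReal.ofReal (∫ x, v x ∂μ) := by
            rw [ofReal_integral_eq_lintegral_ofReal hvμ (Filter.Eventually.of_forall hv0),
              ← hπ1, lintegral_map hvmeas.ennreal_ofReal measurable_fst]
          have e2 : ∫⁻ p : EuclideanSpace ℝ (Fin d) × EuclideanSpace ℝ (Fin d),
              ENNReal.ofReal (v p.2) ∂π = ENNReal.ofReal (∫ x, v x ∂ν) := by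
            rw [ofReal_integral_eq_lintegral_ofReal hvν (Filter.Eventually.of_forall hv0),
              ← hπ2, lintegral_map hvmeas.ennreal_ofReal measurable_snd]
          rw [e1, e2]
      _ = ENNReal.ofReal (4 * κ ^ 2 * (1 + (∫ x, v x ∂μ) + ∫ x, v x ∂ν)) := by
          rw [ENNReal.ofReal_mul (p := 4 * κ ^ 2) (by positivity)]
          congr 1
          rw [ENNReal.ofReal_add (by linarith [integral_nonneg (f := v) hv0 (μ := μ)]) (integral_nonneg (f := v) hv0),
            ENNReal.ofReal_add (by norm_num) (integral_nonneg (f := v) hv0), ENNReal.ofReal_one]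
  -- g^2 identity
  have hg2 : ∀ p : EuclideanSpace ℝ (Fin d) × EuclideanSpace ℝ (Fin d),
      g p ^ (2:ℝ) = ENNReal.ofReal (‖p.1 - p.2‖ ^ 2) := by
    intro p
    exact hpow _ (norm_nonneg _)
  -- assemble
  have key : ENNReal.ofReal ‖A‖ ≤
      (∫⁻ p, f p ^ (2:ℝ) ∂π) ^ ((1:ℝ)/2) * (∫⁻ p, g p ^ (2:ℝ) ∂π) ^ ((1:ℝ)/2) :=
    le_trans hnorm (le_trans (lintegral_mono hpt) hCS)
  have hsq : ENNReal.ofReal (‖A‖ ^ 2) = (ENNReal.ofReal ‖A‖) ^ (2:ℝ) :=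
    (hpow _ (norm_nonneg _)).symm
  rw [hsq]
  calc (ENNReal.ofReal ‖A‖) ^ (2:ℝ)
      ≤ ((∫⁻ p, f p ^ (2:ℝ) ∂π) ^ ((1:ℝ)/2) * (∫⁻ p, g p ^ (2:ℝ) ∂π) ^ ((1:ℝ)/2)) ^ (2:ℝ) :=
        ENNReal.rpow_le_rpow key (by norm_num)
    _ = (∫⁻ p, f p ^ (2:ℝ) ∂π) * (∫⁻ p, g p ^ (2:ℝ) ∂π) := by
        rw [ENNReal.mul_rpow_of_nonneg _ _ (by norm_num), ← ENNReal.rpow_mul, ← ENNReal.rpow_mul]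
        norm_num
    _ ≤ ENNReal.ofReal (4 * κ ^ 2 * (1 + (∫ x, v x ∂μ) + ∫ x, v x ∂ν)) *
          ∫⁻ p, ENNReal.ofReal (‖p.1 - p.2‖ ^ 2) ∂π := by
        apply mul_le_mul' hf2
        apply le_of_eq
        exact lintegral_congr hg2
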